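/- arXiv:2505.20898 — 3 statements merged into one kernel-verified Lean document; each statement's English description precedes it below -/
import Mathlib

section
/- For all natural numbers n > 2, the inequality 6^(n-1) < binomial(n^2, n) holds. -/
open Finset Nat

lemma fact_eq_prod_sub (n : ℕ) : (∏ i ∈ range n, (n - i)) = n ! := by
  rw [← Finset.prod_range_add_one_eq_factorial]
  rw [← Finset.prod_range_reflect (fun j => j + 1) n]
  apply Finset.prod_congr rfl
  intro i hi
  simp only [Finset.mem_range] at hi
  omega

lemma pow_mul_fact_le_descFact (n : ℕ) :
    n ^ n * n ! ≤ (n ^ 2).descFactorial n := by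
  rw [Nat.descFactorial_eq_prod_range]
  calc n ^ n * n ! = ∏ i ∈ range n, (n * (n - i)) := by
        rw [Finset.prod_mul_distrib, Finset.prod_const, Finset.card_range,
          fact_eq_prod_sub]
    _ ≤ ∏ i ∈ range n, (n ^ 2 - i) := by
        apply Finset.prod_le_prod'
        intro i hi
        simp only [Finset.mem_range] at hi
        have : n * i ≥ i := Nat.le_mul_of_pos_left i (by omega)
        have hx : n * (n - i) = n ^ 2 - n * i := by
          rw [Nat.mul_sub]; ring_nf
        omega

lemma pow_le_choose_sq (n : ℕ) : n ^ n ≤ Nat.choose (n ^ 2) n := by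
  have h := pow_mul_fact_le_descFact n
  rw [Nat.descFactorial_eq_factorial_mul_choose, mul_comm (n !)] at h
  exact Nat.le_of_mul_le_mul_right h (Nat.factorial_pos n)

lemma six_pow_lt_pow_self (n : ℕ) (hn : 4 ≤ n) : 6 ^ (n - 1) < n ^ n := by
  rcases Nat.lt_or_ge n 6 with h | h
  · interval_cases n <;> norm_num
  · calc 6 ^ (n - 1) < 6 ^ n := Nat.pow_lt_pow_right (by norm_num) (by omega)
      _ ≤ n ^ n := Nat.pow_le_pow_left h n

theorem six_pow_lt_choose (n : ℕ) (hn : 2 < n) :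
    6 ^ (n - 1) < Nat.choose (n ^ 2) n := by
  rcases Nat.lt_or_ge n 4 with h | h
  · interval_cases n; decide
  · exact lt_of_lt_of_le (six_pow_lt_pow_self n h) (pow_le_choose_sq n)
end

section
/- For all natural numbers n ≥ 1 and 0 ≤ m ≤ n, the m-th derivative of the Chebyshev polynomial of the first kind satisfies T_n^{(m)}(1) = ∏_{k=0}^{m-1} (n^2 − k^2)/(2k+1). -/
open Polynomial Polynomial.Chebyshev

lemma T_eval_one' (k : ℤ) : (T ℝ k).eval 1 = 1 := by
  induction k using Polynomial.Chebyshev.induct with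
  | zero => simp
  | one => simp
  | add_two n h1 h2 => simp [T_add_two, h1, h2]; ring
  | neg_add_one n h1 h2 => rw [T_sub_one]; simp [T_neg] at h1; simp [h1, h2]; ring

lemma chebyshev_ODE (n : ℤ) :
    (1 - X ^ 2) * derivative (derivative (T ℝ n)) =
      X * derivative (T ℝ n) - (n : ℝ[X]) ^ 2 * T ℝ n := by
  have h1 := T_derivative_eq_U (R := ℝ) n
  have h2 := add_one_mul_T_eq_poly_in_U (R := ℝ) (n - 1)
  have h4 : ((n - 1 : ℤ) : ℝ[X]) + 1 = (n : ℝ[X]) := by push_cast; ring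
  rw [h4, sub_add_cancel] at h2
  have h3 : derivative (derivative (T ℝ n)) = (n : ℝ[X]) * derivative (U ℝ (n - 1)) := by
    rw [h1, derivative_mul, derivative_intCast]; ring
  rw [h3]
  linear_combination (-X : ℝ[X]) * h1 + (n : ℝ[X]) * h2

lemma chebyshev_key (n : ℤ) (m : ℕ) :
    (1 - X ^ 2) * derivative^[m+2] (T ℝ n) =
      (2 * (m : ℝ[X]) + 1) * X * derivative^[m+1] (T ℝ n)
        - ((n : ℝ[X]) ^ 2 - (m : ℝ[X]) ^ 2) * derivative^[m] (T ℝ n) := by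
  induction m with
  | zero => simpa using chebyshev_ODE n
  | succ m ih =>
    have h := congrArg derivative ih
    simp only [Function.iterate_succ_apply', derivative_mul, derivative_sub, derivative_add,
      derivative_natCast, derivative_intCast, derivative_one, derivative_X, derivative_X_pow,
      derivative_ofNat, derivative_pow, map_ofNat, Nat.cast_succ] at h ⊢
    push_cast at h ⊢
    norm_num at h
    rw [map_ofNat Polynomial.C 2] at h
    linear_combination h

lemma chebyshev_rec (n : ℤ) (m : ℕ) :
    (derivative^[m+1] (T ℝ n)).eval 1
      = (((n : ℝ) ^ 2 - (m : ℝ) ^ 2) / (2 * (m : ℝ) + 1)) * (derivative^[m] (T ℝ n)).eval 1 := by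
  have h := congrArg (Polynomial.eval (1 : ℝ)) (chebyshev_key n m)
  simp only [eval_mul, eval_sub, eval_add, eval_one, eval_pow, eval_X, eval_natCast,
    eval_intCast, eval_ofNat] at h
  have hpos : (2 * (m : ℝ) + 1) ≠ 0 := by positivity
  rw [div_mul_eq_mul_div, eq_div_iff hpos]
  linear_combination -h

open Finset in
theorem chebyshev_T_iterated_derivative_eval_one (n m : ℕ) (hn : 1 ≤ n) (hm : m ≤ n) :
    ((Polynomial.derivative)^[m] (Polynomial.Chebyshev.T ℝ (n : ℤ))).eval 1
      = ∏ k ∈ Finset.range m, (((n : ℝ) ^ 2 - (k : ℝ) ^ 2) / (2 * (k : ℝ) + 1)) := by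
  induction m with
  | zero => simpa using T_eval_one' (n : ℤ)
  | succ m ih =>
    rw [Finset.prod_range_succ, ← ih (le_of_lt (Nat.lt_of_succ_le hm)), chebyshev_rec (n : ℤ) m]
    push_cast
    ring
end

section
/- Let f be an integer-coefficient polynomial P(z) + 1 whose constant term is 1 and whose coefficients are positive integers, with P(0) = 0 and P(1) + 1 ≠ 0. If P(−1) ≠ −1, then −1 is not a periodic point of the map z ↦ P(z) restricted to integers; that is, P^p(−1) ≠ −1 for all p ≥ 1. -/
theorem neg_one_not_periodic (P : Polynomial ℤ)
    (h0 : P.coeff 0 = 0)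
    (hpos : ∀ i : ℕ, 1 ≤ i → i ≤ P.natDegree → 0 < P.coeff i)
    (h1 : P.eval 1 + 1 ≠ 0)
    (hm1 : P.eval (-1) ≠ -1) :
    ∀ p : ℕ, 1 ≤ p → (fun z : ℤ => P.eval z)^[p] (-1) ≠ -1 := by
  intro p hp hcon
  obtain ⟨q, rfl⟩ : ∃ q, p = q + 1 := ⟨p - 1, by omega⟩
  set y := (fun z : ℤ => P.eval z)^[q] (-1) with hy_def
  rw [Function.iterate_succ_apply'] at hcon
  have hy : P.eval y = -1 := hcon
  have h00 : P.eval 0 = 0 := by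
    rw [← Polynomial.coeff_zero_eq_eval_zero, h0]
  have hdvd : y ∣ (-1 : ℤ) := by
    have h := Polynomial.sub_dvd_eval_sub y 0 P
    rw [hy, h00, sub_zero, sub_zero] at h
    exact h
  have : y = 1 ∨ y = -1 := by
    have : IsUnit y := isUnit_of_dvd_unit hdvd (by exact (isUnit_one.neg))
    exact Int.isUnit_iff.mp this
  rcases this with h | h
  · rw [h] at hy; omega
  · rw [h] at hy; exact hm1 hy
end
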